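/- For every t ≥ 1, the infimum over all (u_1, …, u_t) ∈ (ℝ^d)^t of Q_t(u_1, …, u_t) is attained and equals −e_tᵀ D_t^{−1} e_t + f_t. -/

import Mathlib

set_option autoImplicit false

open Matrix Finset

noncomputable section

/-- `D_1 = b I + x_1 x_1ᵀ`, `D_t = (D_{t-1}⁻¹ + c⁻¹ I)⁻¹ + x_t x_tᵀ` for `t ≥ 2`. -/
def lasecD (d : ℕ) (b c : ℝ) (x : ℕ → Fin d → ℝ) : ℕ → Matrix (Fin d) (Fin d) ℝ
  | 0 => 1  -- unused
  | 1 => b • (1 : Matrix (Fin d) (Fin d) ℝ) + vecMulVec (x 1) (x 1)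
  | t + 2 => ((lasecD d b c x (t + 1))⁻¹ + c⁻¹ • (1 : Matrix (Fin d) (Fin d) ℝ))⁻¹
      + vecMulVec (x (t + 2)) (x (t + 2))

/-- `e_1 = y_1 x_1`, `e_t = (I + c⁻¹ D_{t-1})⁻¹ e_{t-1} + y_t x_t` for `t ≥ 2`. -/
def lasecE (d : ℕ) (b c : ℝ) (x : ℕ → Fin d → ℝ) (y : ℕ → ℝ) : ℕ → (Fin d → ℝ)
  | 0 => 0  -- unused
  | 1 => y 1 • x 1
  | t + 2 => ((1 : Matrix (Fin d) (Fin d) ℝ) + c⁻¹ • lasecD d b c x (t + 1))⁻¹ *ᵥ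
        lasecE d b c x y (t + 1) + y (t + 2) • x (t + 2)

/-- `f_1 = y_1²`, `f_t = f_{t-1} - e_{t-1}ᵀ (c I + D_{t-1})⁻¹ e_{t-1} + y_t²` for `t ≥ 2`. -/
def lasecF (d : ℕ) (b c : ℝ) (x : ℕ → Fin d → ℝ) (y : ℕ → ℝ) : ℕ → ℝ
  | 0 => 0  -- unused
  | 1 => (y 1) ^ 2
  | t + 2 => lasecF d b c x y (t + 1)
      - lasecE d b c x y (t + 1) ⬝ᵥ
          ((c • (1 : Matrix (Fin d) (Fin d) ℝ) + lasecD d b c x (t + 1))⁻¹ *ᵥ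
            lasecE d b c x y (t + 1))
      + (y (t + 2)) ^ 2

/-- `Q_t(u_1,…,u_t) = b‖u_1‖² + c Σ_{s=1}^{t-1} ‖u_{s+1}-u_s‖² + Σ_{s=1}^{t} (y_s - u_sᵀx_s)²`. -/
def lasecQ (d : ℕ) (b c : ℝ) (x : ℕ → Fin d → ℝ) (y : ℕ → ℝ) (t : ℕ)
    (u : ℕ → Fin d → ℝ) : ℝ :=
  b * (∑ i, (u 1 i) ^ 2) + c * ∑ s ∈ Icc 1 (t - 1), ∑ i, (u (s + 1) i - u s i) ^ 2
    + ∑ s ∈ Icc 1 t, (y s - u s ⬝ᵥ x s) ^ 2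

section LasecHelpers
variable {d : ℕ}

variable {d : ℕ}

lemma sum_sq_eq_dot (a : Fin d → ℝ) : ∑ i, (a i)^2 = a ⬝ᵥ a := by
  simp [dotProduct, sq]

lemma dot_symm {M : Matrix (Fin d) (Fin d) ℝ} (hM : Mᵀ = M) (a b : Fin d → ℝ) :
    a ⬝ᵥ (M *ᵥ b) = b ⬝ᵥ (M *ᵥ a) := by
  rw [Matrix.dotProduct_mulVec, ← Matrix.mulVec_transpose, hM, dotProduct_comm]

lemma posdef_transpose {M : Matrix (Fin d) (Fin d) ℝ} (hM : M.PosDef) : Mᵀ = M := by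
  have := hM.isHermitian
  rwa [Matrix.IsHermitian, Matrix.conjTranspose_eq_transpose_of_trivial] at this

lemma quad_nonneg {M : Matrix (Fin d) (Fin d) ℝ} (hM : M.PosDef) (v : Fin d → ℝ) :
    0 ≤ v ⬝ᵥ (M *ᵥ v) := by
  simpa using hM.posSemidef.dotProduct_mulVec_nonneg v

lemma posdef_smul_one {c : ℝ} (hc : 0 < c) :
    (c • (1 : Matrix (Fin d) (Fin d) ℝ)).PosDef := by
  rw [Matrix.posDef_iff_dotProduct_mulVec]
  constructor
  · simp [Matrix.IsHermitian]
  · intro v hv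
    have : (0:ℝ) < v ⬝ᵥ v := by
      have := Matrix.PosDef.one (n := Fin d) (R := ℝ)
      simpa using this.dotProduct_mulVec_pos hv
    simpa [Matrix.smul_mulVec, smul_eq_mul] using mul_pos hc this

lemma posSemidef_vmv (x : Fin d → ℝ) : (vecMulVec x x).PosSemidef := by
  rw [Matrix.posSemidef_iff_dotProduct_mulVec]
  constructor
  · ext i j; simp [Matrix.IsHermitian, vecMulVec, mul_comm]
  · intro v
    have h : (vecMulVec x x) *ᵥ v = (x ⬝ᵥ v) • x := by
      ext i; simp only [Matrix.mulVec, vecMulVec, dotProduct, Pi.smul_apply, smul_eq_mul,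
        Matrix.of_apply, Finset.sum_mul, Finset.mul_sum]
      exact Finset.sum_congr rfl fun j _ => by ring
    rw [h]
    simp only [star_trivial, dotProduct_smul, smul_eq_mul]
    have hvx : v ⬝ᵥ x = x ⬝ᵥ v := dotProduct_comm _ _
    rw [hvx]
    exact mul_self_nonneg _

section ident
variable {c : ℝ} {D : Matrix (Fin d) (Fin d) ℝ}

lemma posdef_M (hc : 0 < c) (hD : D.PosDef) : (c • 1 + D).PosDef :=
  (posdef_smul_one hc).add_posSemidef hD.posSemidef

lemma posdef_N (hc : 0 < c) (hD : D.PosDef) : (D⁻¹ + c⁻¹ • 1).PosDef :=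
  hD.inv.add_posSemidef (posdef_smul_one (by positivity)).posSemidef

lemma ident1 (hc : 0 < c) (hD : D.PosDef) :
    (D⁻¹ + c⁻¹ • (1 : Matrix (Fin d) (Fin d) ℝ))⁻¹
      = c • 1 - (c^2) • (c • 1 + D)⁻¹ := by
  have hM : (c • 1 + D).PosDef := posdef_M hc hD
  have hMdet : IsUnit (c • 1 + D).det := isUnit_iff_ne_zero.2 (ne_of_gt hM.det_pos)
  have hDdet : IsUnit D.det := isUnit_iff_ne_zero.2 (ne_of_gt hD.det_pos)
  have hMM : (c • 1 + D) * (c • 1 + D)⁻¹ = 1 := Matrix.mul_nonsing_inv _ hMdet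
  have hDD : D⁻¹ * D = 1 := Matrix.nonsing_inv_mul _ hDdet
  apply Matrix.inv_eq_right_inv
  have hN : D⁻¹ + c⁻¹ • (1 : Matrix (Fin d) (Fin d) ℝ) = c⁻¹ • (D⁻¹ * (c • 1 + D)) := by
    rw [Matrix.mul_add, Matrix.mul_smul, Matrix.mul_one, hDD, smul_add, smul_smul,
      inv_mul_cancel₀ (ne_of_gt hc), one_smul, add_comm]
  have hDM : D⁻¹ * (c • 1 + D) = c • D⁻¹ + 1 := by
    rw [Matrix.mul_add, Matrix.mul_smul, Matrix.mul_one, hDD]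
  rw [hN, Matrix.smul_mul, Matrix.mul_sub, Matrix.mul_smul, Matrix.mul_one,
    Matrix.mul_smul, Matrix.mul_assoc, hMM, Matrix.mul_one, hDM]
  match_scalars <;> field_simp <;> ring

lemma ident2 (hc : 0 < c) (hD : D.PosDef) :
    ((1 : Matrix (Fin d) (Fin d) ℝ) + c⁻¹ • D)⁻¹ = c • (c • 1 + D)⁻¹ := by
  have hM : (c • 1 + D).PosDef := posdef_M hc hD
  have hMdet : IsUnit (c • 1 + D).det := isUnit_iff_ne_zero.2 (ne_of_gt hM.det_pos)
  have hMM : (c • 1 + D) * (c • 1 + D)⁻¹ = 1 := Matrix.mul_nonsing_inv _ hMdet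
  apply Matrix.inv_eq_right_inv
  have h1 : (1 : Matrix (Fin d) (Fin d) ℝ) + c⁻¹ • D = c⁻¹ • (c • 1 + D) := by
    rw [smul_add, smul_smul, inv_mul_cancel₀ (ne_of_gt hc), one_smul]
  rw [h1, Matrix.smul_mul, Matrix.mul_smul, hMM, smul_smul,
    inv_mul_cancel₀ (ne_of_gt hc), one_smul]

end ident

lemma quad_min {M : Matrix (Fin d) (Fin d) ℝ} (hM : M.PosDef) (e : Fin d → ℝ) (f : ℝ) :
    (∀ w : Fin d → ℝ, -(e ⬝ᵥ (M⁻¹ *ᵥ e)) + f ≤ w ⬝ᵥ (M *ᵥ w) - 2*(e ⬝ᵥ w) + f) ∧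
    ((M⁻¹ *ᵥ e) ⬝ᵥ (M *ᵥ (M⁻¹ *ᵥ e)) - 2*(e ⬝ᵥ (M⁻¹ *ᵥ e)) + f
      = -(e ⬝ᵥ (M⁻¹ *ᵥ e)) + f) := by
  have hsym : Mᵀ = M := posdef_transpose hM
  have hdet : IsUnit M.det := isUnit_iff_ne_zero.2 (ne_of_gt hM.det_pos)
  have hMa : M *ᵥ (M⁻¹ *ᵥ e) = e := by
    rw [Matrix.mulVec_mulVec, Matrix.mul_nonsing_inv _ hdet, Matrix.one_mulVec]
  set a := M⁻¹ *ᵥ e with ha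
  have hea : e ⬝ᵥ a = a ⬝ᵥ e := dotProduct_comm _ _
  constructor
  · intro w
    have h0 : 0 ≤ (w - a) ⬝ᵥ (M *ᵥ (w - a)) := quad_nonneg hM _
    have hexp : (w - a) ⬝ᵥ (M *ᵥ (w - a))
        = w ⬝ᵥ (M *ᵥ w) - 2*(e ⬝ᵥ w) + e ⬝ᵥ a := by
      have h1 : a ⬝ᵥ (M *ᵥ w) = w ⬝ᵥ (M *ᵥ a) := dot_symm hsym a w
      rw [Matrix.mulVec_sub, dotProduct_sub, sub_dotProduct,
        sub_dotProduct, h1, hMa]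
      have h2 : w ⬝ᵥ e = e ⬝ᵥ w := dotProduct_comm _ _
      have h3 : a ⬝ᵥ e = e ⬝ᵥ a := dotProduct_comm _ _
      rw [h2, h3]; ring
    nlinarith [h0, hexp]
  · rw [hMa, hea]; ring

lemma complete_square {M : Matrix (Fin d) (Fin d) ℝ} (hM : M.PosDef) (g u : Fin d → ℝ) :
    (u - M⁻¹ *ᵥ g) ⬝ᵥ (M *ᵥ (u - M⁻¹ *ᵥ g))
      = u ⬝ᵥ (M *ᵥ u) - 2*(g ⬝ᵥ u) + g ⬝ᵥ (M⁻¹ *ᵥ g) := by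
  have hsym : Mᵀ = M := posdef_transpose hM
  have hdet : IsUnit M.det := isUnit_iff_ne_zero.2 (ne_of_gt hM.det_pos)
  have hMa : M *ᵥ (M⁻¹ *ᵥ g) = g := by
    rw [Matrix.mulVec_mulVec, Matrix.mul_nonsing_inv _ hdet, Matrix.one_mulVec]
  set a := M⁻¹ *ᵥ g with ha
  have h1 : a ⬝ᵥ (M *ᵥ u) = u ⬝ᵥ (M *ᵥ a) := dot_symm hsym a u
  rw [Matrix.mulVec_sub, dotProduct_sub, sub_dotProduct,
    sub_dotProduct, h1, hMa]
  have h2 : u ⬝ᵥ g = g ⬝ᵥ u := dotProduct_comm _ _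
  have h3 : a ⬝ᵥ g = g ⬝ᵥ a := dotProduct_comm _ _
  rw [h2, h3]; ring

lemma step_identity {c : ℝ} {D : Matrix (Fin d) (Fin d) ℝ} (hc : 0 < c) (hD : D.PosDef)
    (e w v : Fin d → ℝ) :
    (v ⬝ᵥ (D *ᵥ v) - 2*(e ⬝ᵥ v) + c * ((w - v) ⬝ᵥ (w - v)))
      - (w ⬝ᵥ ((D⁻¹ + c⁻¹ • (1 : Matrix (Fin d) (Fin d) ℝ))⁻¹ *ᵥ w)
         - 2*((((1 : Matrix (Fin d) (Fin d) ℝ) + c⁻¹ • D)⁻¹ *ᵥ e) ⬝ᵥ w)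
         - e ⬝ᵥ ((c • 1 + D)⁻¹ *ᵥ e))
    = (v - (c • 1 + D)⁻¹ *ᵥ (e + c • w)) ⬝ᵥ
        ((c • 1 + D) *ᵥ (v - (c • 1 + D)⁻¹ *ᵥ (e + c • w))) := by
  have hM : (c • 1 + D).PosDef := posdef_M hc hD
  have hKsym : ((c • 1 + D)⁻¹)ᵀ = (c • 1 + D)⁻¹ := posdef_transpose hM.inv
  rw [ident1 hc hD, ident2 hc hD, complete_square hM (e + c • w) v]
  set K := (c • 1 + D)⁻¹ with hK
  -- expand everything into scalar atoms
  simp only [Matrix.add_mulVec, Matrix.sub_mulVec, Matrix.smul_mulVec,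
    Matrix.one_mulVec, Matrix.mulVec_add, Matrix.mulVec_smul, Matrix.mulVec_sub,
    dotProduct_add, add_dotProduct, dotProduct_sub,
    sub_dotProduct, dotProduct_smul, smul_dotProduct]
  have c1 : w ⬝ᵥ v = v ⬝ᵥ w := dotProduct_comm _ _
  have c2 : e ⬝ᵥ v = v ⬝ᵥ e := dotProduct_comm _ _
  have c3 : e ⬝ᵥ (K *ᵥ w) = w ⬝ᵥ (K *ᵥ e) := dot_symm hKsym e w
  have c4 : (K *ᵥ e) ⬝ᵥ w = w ⬝ᵥ (K *ᵥ e) := dotProduct_comm _ _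
  simp only [smul_eq_mul, c1, c2, c3, c4]
  ring

section ProblemLemmas
variable {b c : ℝ} {x : ℕ → Fin d → ℝ} {y : ℕ → ℝ}


lemma lasecQ_succ (n : ℕ) (u : ℕ → Fin d → ℝ) :
    lasecQ d b c x y (n + 2) u = lasecQ d b c x y (n + 1) u
      + c * (∑ i, (u (n + 2) i - u (n + 1) i) ^ 2)
      + (y (n + 2) - u (n + 2) ⬝ᵥ x (n + 2)) ^ 2 := by
  unfold lasecQ
  have h1 : n + 2 - 1 = n + 1 := rfl
  have h2 : n + 1 - 1 = n := rfl
  rw [h1, h2, Finset.sum_Icc_succ_top (Nat.le_add_left 1 n),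
    Finset.sum_Icc_succ_top (Nat.le_add_left 1 (n + 1))]
  ring

lemma lasecQ_congr (t : ℕ) {u u' : ℕ → Fin d → ℝ}
    (h : ∀ s, 1 ≤ s → s ≤ t → u s = u' s) (ht : 1 ≤ t) :
    lasecQ d b c x y t u = lasecQ d b c x y t u' := by
  unfold lasecQ
  have h1 : u 1 = u' 1 := h 1 le_rfl ht
  rw [h1]
  congr 1
  · congr 2
    apply Finset.sum_congr rfl
    intro s hs
    simp only [Finset.mem_Icc] at hs
    rw [h s hs.1 (le_trans hs.2 (Nat.sub_le t 1)),
      h (s+1) (Nat.le_add_left 1 s) (by omega)]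
  · apply Finset.sum_congr rfl
    intro s hs
    simp only [Finset.mem_Icc] at hs
    rw [h s hs.1 hs.2]

lemma vmv_mulVec (x v : Fin d → ℝ) : vecMulVec x x *ᵥ v = (x ⬝ᵥ v) • x := by
  ext i
  simp only [Matrix.mulVec, vecMulVec, dotProduct, Pi.smul_apply, smul_eq_mul,
    Matrix.of_apply, Finset.sum_mul, Finset.mul_sum]
  exact Finset.sum_congr rfl fun j _ => by ring

lemma lasec_main (hb : 0 < b) (hc : 0 < c) :
    ∀ n : ℕ, (lasecD d b c x (n + 1)).PosDef ∧
      ∀ w : Fin d → ℝ,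
        IsLeast {r : ℝ | ∃ u : ℕ → Fin d → ℝ, u (n + 1) = w ∧ r = lasecQ d b c x y (n + 1) u}
          (w ⬝ᵥ (lasecD d b c x (n + 1) *ᵥ w) - 2 * (lasecE d b c x y (n + 1) ⬝ᵥ w)
            + lasecF d b c x y (n + 1)) := by
  intro n
  induction n with
  | zero =>
    have hD1 : lasecD d b c x 1 = b • 1 + vecMulVec (x 1) (x 1) := by rw [lasecD]
    have hE1 : lasecE d b c x y 1 = y 1 • x 1 := by rw [lasecE]
    have hF1 : lasecF d b c x y 1 = (y 1) ^ 2 := by rw [lasecF]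
    have hpd : (lasecD d b c x 1).PosDef := by
      rw [hD1]; exact (posdef_smul_one hb).add_posSemidef (posSemidef_vmv _)
    refine ⟨hpd, fun w => ?_⟩
    have hval : ∀ u : ℕ → Fin d → ℝ, u 1 = w →
        lasecQ d b c x y 1 u = w ⬝ᵥ (lasecD d b c x 1 *ᵥ w)
          - 2 * (lasecE d b c x y 1 ⬝ᵥ w) + lasecF d b c x y 1 := by
      intro u hu
      unfold lasecQ
      rw [hD1, hE1, hF1, hu]
      have h0 : Icc 1 (1 - 1) = (∅ : Finset ℕ) := rfl
      have h1 : Icc 1 1 = {1} := rfl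
      rw [h0, h1]
      simp only [Finset.sum_empty, Finset.sum_singleton, mul_zero, add_zero, hu]
      rw [Matrix.add_mulVec, Matrix.smul_mulVec, Matrix.one_mulVec,
        dotProduct_add, dotProduct_smul, vmv_mulVec,
        dotProduct_smul, smul_dotProduct]
      rw [sum_sq_eq_dot]
      have hcomm : w ⬝ᵥ x 1 = x 1 ⬝ᵥ w := dotProduct_comm _ _
      rw [hcomm]
      simp only [smul_eq_mul]
      ring
    constructor
    · exact ⟨fun _ => w, rfl, (hval (fun _ => w) rfl).symm⟩
    · rintro r ⟨u, hu, rfl⟩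
      rw [hval u hu]
  | succ n ih =>
    obtain ⟨hDpd, hIH⟩ := ih
    set D := lasecD d b c x (n + 1) with hDdef
    set E := lasecE d b c x y (n + 1) with hEdef
    set F := lasecF d b c x y (n + 1) with hFdef
    have hD2 : lasecD d b c x (n + 2) = (D⁻¹ + c⁻¹ • 1)⁻¹ + vecMulVec (x (n+2)) (x (n+2)) := by
      rw [lasecD]
    have hE2 : lasecE d b c x y (n + 2)
        = ((1 : Matrix (Fin d) (Fin d) ℝ) + c⁻¹ • D)⁻¹ *ᵥ E + y (n+2) • x (n+2) := by
      rw [lasecE]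
    have hF2 : lasecF d b c x y (n + 2)
        = F - E ⬝ᵥ ((c • (1 : Matrix (Fin d) (Fin d) ℝ) + D)⁻¹ *ᵥ E) + (y (n+2)) ^ 2 := by
      rw [lasecF]
    have hpd2 : (lasecD d b c x (n + 2)).PosDef := by
      rw [hD2]
      exact ((posdef_N hc hDpd).inv).add_posSemidef (posSemidef_vmv _)
    refine ⟨hpd2, fun w => ?_⟩
    set m : Fin d → ℝ := (c • 1 + D)⁻¹ *ᵥ (E + c • w) with hm
    have hstep : ∀ v : Fin d → ℝ,
        (v ⬝ᵥ (D *ᵥ v) - 2 * (E ⬝ᵥ v) + F) + c * (∑ i, (w i - v i) ^ 2)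
          + (y (n+2) - w ⬝ᵥ x (n+2)) ^ 2
          - (w ⬝ᵥ (lasecD d b c x (n + 2) *ᵥ w) - 2 * (lasecE d b c x y (n + 2) ⬝ᵥ w)
            + lasecF d b c x y (n + 2))
        = (v - m) ⬝ᵥ ((c • 1 + D) *ᵥ (v - m)) := by
      intro v
      have key := step_identity hc hDpd E w v
      rw [hD2, hE2, hF2, hm]
      have hsum : ∑ i, (w i - v i) ^ 2 = (w - v) ⬝ᵥ (w - v) := by
        rw [← sum_sq_eq_dot]; simp
      rw [hsum]
      rw [Matrix.add_mulVec, vmv_mulVec, dotProduct_add, dotProduct_smul,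
        add_dotProduct, smul_dotProduct]
      have hcomm : w ⬝ᵥ x (n+2) = x (n+2) ⬝ᵥ w := dotProduct_comm _ _
      rw [hcomm]
      simp only [smul_eq_mul]
      linear_combination key
    constructor
    · obtain ⟨u', hu'1, hu'2⟩ := (hIH m).1
      refine ⟨Function.update u' (n + 2) w, Function.update_self _ _ _, ?_⟩
      have h2 : Function.update u' (n + 2) w (n + 1) = m := by
        rw [Function.update_of_ne (by omega)]; exact hu'1
      have h3 : lasecQ d b c x y (n + 1) (Function.update u' (n + 2) w)
          = lasecQ d b c x y (n + 1) u' := by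
        apply lasecQ_congr _ _ (Nat.le_add_left 1 n)
        intro s hs1 hs2
        exact Function.update_of_ne (by omega) _ _
      have h4 := hstep m
      rw [lasecQ_succ, h3, ← hu'2, Function.update_self, h2]
      have h5 : (m - m) ⬝ᵥ ((c • 1 + D) *ᵥ (m - m)) = 0 := by
        simp
      rw [h5] at h4
      linarith
    · rintro r ⟨u, hu, rfl⟩
      have hQ1 : (u (n+1)) ⬝ᵥ (D *ᵥ (u (n+1))) - 2 * (E ⬝ᵥ (u (n+1))) + F
          ≤ lasecQ d b c x y (n + 1) u := (hIH (u (n+1))).2 ⟨u, rfl, rfl⟩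
      have h4 := hstep (u (n+1))
      have h0 : 0 ≤ (u (n+1) - m) ⬝ᵥ ((c • 1 + D) *ᵥ (u (n+1) - m)) :=
        quad_nonneg (posdef_M hc hDpd) _
      rw [lasecQ_succ, hu]
      linarith

end ProblemLemmas
end LasecHelpers

/-- for every `t ≥ 1`, the infimum of
`Q_t(u_1,…,u_t)` over all `(u_1,…,u_t)` is attained and equals
`-e_tᵀ D_t⁻¹ e_t + f_t`. -/
theorem lasec_min_Q (d : ℕ) (hd : 1 ≤ d) (b c : ℝ) (hb : 0 < b) (hbc : b < c)
    (x : ℕ → Fin d → ℝ) (y : ℕ → ℝ) :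
    ∀ t : ℕ, 1 ≤ t →
      IsLeast {r : ℝ | ∃ u : ℕ → Fin d → ℝ, r = lasecQ d b c x y t u}
        (-(lasecE d b c x y t ⬝ᵥ ((lasecD d b c x t)⁻¹ *ᵥ lasecE d b c x y t))
          + lasecF d b c x y t) := by

  intro t ht
  obtain ⟨n, rfl⟩ : ∃ n, t = n + 1 := ⟨t - 1, (Nat.succ_pred_eq_of_pos ht).symm⟩
  have hc : 0 < c := lt_trans hb hbc
  obtain ⟨hpd, hIH⟩ := lasec_main (x := x) (y := y) hb hc n
  have hq := quad_min hpd (lasecE d b c x y (n + 1)) (lasecF d b c x y (n + 1))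
  constructor
  · obtain ⟨u, hu1, hu2⟩ :=
      (hIH ((lasecD d b c x (n + 1))⁻¹ *ᵥ lasecE d b c x y (n + 1))).1
    exact ⟨u, by rw [← hu2, hq.2]⟩
  · rintro r ⟨u, rfl⟩
    have h1 := (hIH (u (n + 1))).2 ⟨u, rfl, rfl⟩
    have h2 := hq.1 (u (n + 1))
    linarith

end
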